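/- Let H⁽¹⁾ and H⁽²⁾ be labelled multihypergraphs on finite vertex sets V₁ and V₂ with V₁ ∩ V₂ = {r} and disjoint edge families, each k-critical and each admitting a two-sided star certificate. Then the one-vertex sum H = H⁽¹⁾ ∨_r H⁽²⁾ is k-critical and admits a two-sided star certificate; in particular H is k-weakly-partition-connected and has a k-distinguishable tree assignment. -/

import Mathlib

open scoped Classical
noncomputable section

variable {W : Type*}

/-- `A` is the edge set of a tree with vertex set `e`: no loops, all endpoints in `e`,
acyclic, and any two vertices of `e` are connected. -/
def IsTreeOn (e : Finset W) (A : Finset (Sym2 W)) : Prop :=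
  (∀ s ∈ A, ¬ s.IsDiag) ∧
  (∀ s ∈ A, ∀ v ∈ s, v ∈ e) ∧
  (SimpleGraph.fromEdgeSet (A : Set (Sym2 W))).IsAcyclic ∧
  (∀ x ∈ e, ∀ y ∈ e, (SimpleGraph.fromEdgeSet (A : Set (Sym2 W))).Reachable x y)

/-- Number of blocks of the partition `P` that meet `e`. -/
def pblocks [DecidableEq W] {U : Finset W} (P : Finpartition U) (e : Finset W) : ℕ :=
  (P.parts.filter fun B => (B ∩ e).Nonempty).card

/-- Number of edges in `A` whose two endpoints lie in distinct blocks of `P`. -/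
def crossEdges [DecidableEq W] {U : Finset W} (P : Finpartition U) (A : Finset (Sym2 W)) : ℕ :=
  (A.filter fun s => ∀ B ∈ P.parts, ¬ (∀ v ∈ s, v ∈ B)).card

/-- `k`-weak partition connectivity of the multihypergraph with vertex set `U`
and hyperedge family `E`. -/
def WeaklyPC [DecidableEq W] {ι : Type*} [Fintype ι] (U : Finset W)
    (E : ι → Finset W) (k : ℕ) : Prop :=
  ∀ P : Finpartition U, k * (P.parts.card - 1) ≤ ∑ i, (pblocks P (E i) - 1)

/-- The labelled edge set of the tree assignment `F`: each graph edge is tagged by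
the hyperedge occurrence producing it. -/
def LEdges [DecidableEq W] {ι : Type*} [Fintype ι] [DecidableEq ι]
    (F : ι → Finset (Sym2 W)) : Finset (ι × Sym2 W) :=
  Finset.univ.biUnion fun i => (F i).image fun s => (i, s)

/-- An (ordered) `k`-tree decomposition of the labelled union of the tree assignment `F`:
each labelled edge gets a layer, and the labelled edges of each layer are (bijectively)
the edge set of a spanning tree of `U`. -/
structure KTreeDecomp [DecidableEq W] {ι : Type*} [Fintype ι] [DecidableEq ι]
    (U : Finset W) (F : ι → Finset (Sym2 W)) (k : ℕ) where
  layer : ι × Sym2 W → Fin k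
  tree : Fin k → Finset (Sym2 W)
  tree_isTree : ∀ j, IsTreeOn U (tree j)
  tree_eq : ∀ j, tree j = ((LEdges F).filter fun p => layer p = j).image Prod.snd
  layer_inj : ∀ p ∈ LEdges F, ∀ q ∈ LEdges F, layer p = layer q → p.2 = q.2 → p = q

/-- The signature of a `k`-tree decomposition: `sig D e = ∑ i, i • |E(T_i) ∩ E(F_e)|`. -/
def sig [DecidableEq W] {ι : Type*} [Fintype ι] [DecidableEq ι] {U : Finset W}
    {F : ι → Finset (Sym2 W)} {k : ℕ} (D : KTreeDecomp U F k) (i : ι) : ℕ :=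
  ∑ j : Fin k, j.1 * ((F i).filter fun s => D.layer (i, s) = j).card

/-- `H = (U, E)` has a `k`-distinguishable tree assignment. -/
def Distinguishable [DecidableEq W] {ι : Type*} [Fintype ι] [DecidableEq ι]
    (U : Finset W) (E : ι → Finset W) (k : ℕ) : Prop :=
  ∃ F : ι → Finset (Sym2 W), (∀ i, IsTreeOn (E i) (F i)) ∧
    ∃ D : KTreeDecomp U F k, ∀ D' : KTreeDecomp U F k,
      (∀ i, sig D' i = sig D i) → ∀ p ∈ LEdges F, D'.layer p = D.layer p

/-- The star on `e` centered at `c`. -/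
def starOn [DecidableEq W] (e : Finset W) (c : W) : Finset (Sym2 W) :=
  (e.erase c).image fun u => s(c, u)

/-- A two-sided star certificate for the hypergraph `(U, E)`: a star-minimal tree
assignment `F`, a `k`-tree decomposition `D` of its labelled union, and a layer map
`lmap` with `E(F_e) ⊆ E(T_{lmap e})` for all `e`, and `|e| = 2` whenever
`1 ≤ lmap e ≤ k - 2`. -/
structure TwoSidedStarCert [DecidableEq W] {ι : Type*} [Fintype ι] [DecidableEq ι]
    (U : Finset W) (E : ι → Finset W) (k : ℕ) where
  F : ι → Finset (Sym2 W)
  F_tree : ∀ i, IsTreeOn (E i) (F i)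
  F_star : ∀ i, ∃ c ∈ E i, F i = starOn (E i) c
  D : KTreeDecomp U F k
  lmap : ι → Fin k
  contained : ∀ i, ∀ s ∈ F i, D.layer (i, s) = lmap i
  interior_rank_two : ∀ i, 1 ≤ (lmap i).1 → (lmap i).1 ≤ k - 2 → (E i).card = 2

section Helpers

/-! ### Auxiliary lemmas -/

lemma mem_LEdges [DecidableEq W] {ι : Type*} [Fintype ι] [DecidableEq ι]
    (F : ι → Finset (Sym2 W)) (p : ι × Sym2 W) :
    p ∈ LEdges F ↔ p.2 ∈ F p.1 := by
  unfold LEdges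
  simp only [Finset.mem_biUnion, Finset.mem_image, Finset.mem_univ, true_and]
  constructor
  · rintro ⟨i, s, hs, rfl⟩; exact hs
  · intro h; exact ⟨p.1, p.2, h, rfl⟩

lemma reach_of_walk {G G' : SimpleGraph W} (π : W → W)
    (hstep : ∀ a b, G.Adj a b → G'.Reachable (π a) (π b)) :
    ∀ {x y : W}, G.Reachable x y → G'.Reachable (π x) (π y) := by
  intro x y h
  obtain ⟨p⟩ := h
  induction p with
  | nil => exact SimpleGraph.Reachable.refl _
  | cons h p ih => exact (hstep _ _ h).trans ih

lemma reflTransGen_of_reachable {G : SimpleGraph W} {R : W → W → Prop}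
    (hR : ∀ a b, G.Adj a b → R a b) :
    ∀ {x y : W}, G.Reachable x y → Relation.ReflTransGen R x y := by
  intro x y h
  obtain ⟨p⟩ := h
  induction p with
  | nil => exact Relation.ReflTransGen.refl
  | cons h p ih => exact Relation.ReflTransGen.head (hR _ _ h) ih

lemma exists_adj_of_reachable {G : SimpleGraph W} {x y : W} (h : G.Reachable x y)
    (hxy : x ≠ y) : ∃ b, G.Adj x b := by
  obtain ⟨p⟩ := h
  cases p with
  | nil => exact absurd rfl hxy
  | cons h _ => exact ⟨_, h⟩

lemma sym2_diag_of_both [DecidableEq W] (V₁ V₂ : Finset W) (r : W) (hr : V₁ ∩ V₂ = {r}) :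
    ∀ s : Sym2 W, (∀ v ∈ s, v ∈ V₁) → (∀ v ∈ s, v ∈ V₂) → s.IsDiag := by
  intro s
  induction s using Sym2.ind with
  | _ a b =>
    intro h1 h2
    have ha : a ∈ V₁ ∩ V₂ :=
      Finset.mem_inter.mpr ⟨h1 a (Sym2.mem_mk_left a b), h2 a (Sym2.mem_mk_left a b)⟩
    have hb : b ∈ V₁ ∩ V₂ :=
      Finset.mem_inter.mpr ⟨h1 b (Sym2.mem_mk_right a b), h2 b (Sym2.mem_mk_right a b)⟩
    rw [hr, Finset.mem_singleton] at ha hb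
    rw [ha, hb]
    exact Sym2.mk_isDiag_iff.mpr rfl

lemma sym2_eq_of_pair [DecidableEq W] {x y : W} (hxy : x ≠ y) :
    ∀ s : Sym2 W, (∀ v ∈ s, v ∈ ({x, y} : Finset W)) → ¬ s.IsDiag → s = s(x, y) := by
  intro s
  induction s using Sym2.ind with
  | _ a b =>
    intro h hd
    have ha := h a (Sym2.mem_mk_left a b)
    have hb := h b (Sym2.mem_mk_right a b)
    simp only [Finset.mem_insert, Finset.mem_singleton] at ha hb
    have hab : a ≠ b := fun h' => hd (Sym2.mk_isDiag_iff.mpr h')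
    rcases ha with rfl | rfl <;> rcases hb with rfl | rfl
    · exact absurd rfl hab
    · rfl
    · exact Sym2.eq_swap
    · exact absurd rfl hab

lemma isTreeOn_pair_unique [DecidableEq W] {e : Finset W} {A : Finset (Sym2 W)}
    (h : IsTreeOn e A) (h2 : e.card = 2) : ∀ s ∈ A, ∀ t ∈ A, s = t := by
  obtain ⟨x, y, hxy, rfl⟩ := Finset.card_eq_two.mp h2
  intro s hs t ht
  rw [sym2_eq_of_pair hxy s (h.2.1 s hs) (h.1 s hs),
    sym2_eq_of_pair hxy t (h.2.1 t ht) (h.1 t ht)]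

lemma fromEdgeSet_finset_union [DecidableEq W] (A B : Finset (Sym2 W)) :
    SimpleGraph.fromEdgeSet ((A ∪ B : Finset (Sym2 W)) : Set (Sym2 W)) =
      SimpleGraph.fromEdgeSet (A : Set (Sym2 W)) ⊔ SimpleGraph.fromEdgeSet (B : Set (Sym2 W)) := by
  ext a b
  simp only [SimpleGraph.fromEdgeSet_adj, SimpleGraph.sup_adj, Finset.coe_union, Set.mem_union,
    Finset.mem_coe]
  tauto

lemma bridge_side [DecidableEq W] (V₁ V₂ : Finset W) (r : W) (hr : V₁ ∩ V₂ = {r})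
    (A₁ A₂ : Finset (Sym2 W))
    (h₁v : ∀ s ∈ A₁, ∀ v ∈ s, v ∈ V₁) (h₂v : ∀ s ∈ A₂, ∀ v ∈ s, v ∈ V₂)
    (h₁a : (SimpleGraph.fromEdgeSet (A₁ : Set (Sym2 W))).IsAcyclic)
    (e₀ : Sym2 W) :
    e₀ ∈ (SimpleGraph.fromEdgeSet (A₁ : Set (Sym2 W))).edgeSet →
    (SimpleGraph.fromEdgeSet (A₁ : Set (Sym2 W)) ⊔
      SimpleGraph.fromEdgeSet (A₂ : Set (Sym2 W))).IsBridge e₀ := by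
  induction e₀ using Sym2.ind with
  | _ u v =>
  intro he₀
  have hbr := SimpleGraph.isAcyclic_iff_forall_edge_isBridge.mp h₁a he₀
  rw [SimpleGraph.isBridge_iff] at hbr
  rw [SimpleGraph.isBridge_iff]
  have huv : (SimpleGraph.fromEdgeSet (A₁ : Set (Sym2 W))).Adj u v := he₀
  have hnr := hbr
  intro hre
  apply hnr
  have hmem : s(u, v) ∈ A₁ := by
    have h' := huv
    rw [SimpleGraph.fromEdgeSet_adj] at h'
    exact Finset.mem_coe.mp h'.1
  have huV : u ∈ V₁ := h₁v _ hmem u (Sym2.mem_mk_left u v)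
  have hvV : v ∈ V₁ := h₁v _ hmem v (Sym2.mem_mk_right u v)
  set π : W → W := fun x => if x ∈ V₁ then x else r with hπ
  have hstep : ∀ a b,
      ((SimpleGraph.fromEdgeSet (A₁ : Set (Sym2 W)) ⊔ SimpleGraph.fromEdgeSet (A₂ : Set (Sym2 W)))
        \ SimpleGraph.fromEdgeSet {s(u, v)}).Adj a b →
      ((SimpleGraph.fromEdgeSet (A₁ : Set (Sym2 W))) \ SimpleGraph.fromEdgeSet {s(u, v)}).Reachable
        (π a) (π b) := by
    intro a b hab
    rw [SimpleGraph.sdiff_adj] at hab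
    obtain ⟨hab1, hab2⟩ := hab
    cases hab1 with
    | inl h1 =>
      have hm : s(a, b) ∈ A₁ := by
        rw [SimpleGraph.fromEdgeSet_adj] at h1
        exact Finset.mem_coe.mp h1.1
      have haV : a ∈ V₁ := h₁v _ hm a (Sym2.mem_mk_left a b)
      have hbV : b ∈ V₁ := h₁v _ hm b (Sym2.mem_mk_right a b)
      have hadj : ((SimpleGraph.fromEdgeSet (A₁ : Set (Sym2 W)))
          \ SimpleGraph.fromEdgeSet {s(u, v)}).Adj a b :=
        (SimpleGraph.sdiff_adj _ _ _ _).mpr ⟨h1, hab2⟩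
      have h' := hadj.reachable
      simpa [hπ, haV, hbV] using h'
    | inr h2 =>
      have hπr : ∀ z, z ∈ V₂ → π z = r := by
        intro z hz
        by_cases hz1 : z ∈ V₁
        · have hz' : z ∈ V₁ ∩ V₂ := Finset.mem_inter.mpr ⟨hz1, hz⟩
          rw [hr, Finset.mem_singleton] at hz'
          simp [hπ, hz1, hz']
        · simp [hπ, hz1]
      have hm : s(a, b) ∈ A₂ := by
        rw [SimpleGraph.fromEdgeSet_adj] at h2
        exact Finset.mem_coe.mp h2.1
      rw [hπr a (h₂v _ hm a (Sym2.mem_mk_left a b)), hπr b (h₂v _ hm b (Sym2.mem_mk_right a b))]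
  have hkey := reach_of_walk π hstep hre
  simpa [hπ, huV, hvV] using hkey

lemma isTreeOn_union [DecidableEq W] {V₁ V₂ : Finset W} {r : W} (hr : V₁ ∩ V₂ = {r})
    {A₁ A₂ : Finset (Sym2 W)} (h₁ : IsTreeOn V₁ A₁) (h₂ : IsTreeOn V₂ A₂) :
    IsTreeOn (V₁ ∪ V₂) (A₁ ∪ A₂) := by
  have hrr : r ∈ V₁ ∩ V₂ := by rw [hr]; exact Finset.mem_singleton_self r
  obtain ⟨hr1, hr2⟩ := Finset.mem_inter.mp hrr
  have hsup := fromEdgeSet_finset_union A₁ A₂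
  refine ⟨?_, ?_, ?_, ?_⟩
  · intro s hs
    rcases Finset.mem_union.mp hs with h | h
    exacts [h₁.1 s h, h₂.1 s h]
  · intro s hs v hv
    rcases Finset.mem_union.mp hs with h | h
    · exact Finset.mem_union_left _ (h₁.2.1 s h v hv)
    · exact Finset.mem_union_right _ (h₂.2.1 s h v hv)
  · rw [hsup, SimpleGraph.isAcyclic_iff_forall_edge_isBridge]
    intro e he
    rw [SimpleGraph.edgeSet_sup] at he
    rcases he with h | h
    · exact bridge_side V₁ V₂ r hr A₁ A₂ h₁.2.1 h₂.2.1 h₁.2.2.1 e h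
    · have hb := bridge_side V₂ V₁ r (by rw [Finset.inter_comm]; exact hr) A₂ A₁
        h₂.2.1 h₁.2.1 h₂.2.2.1 e h
      rwa [sup_comm] at hb
  · have hle1 : SimpleGraph.fromEdgeSet (A₁ : Set (Sym2 W)) ≤
        SimpleGraph.fromEdgeSet ((A₁ ∪ A₂ : Finset (Sym2 W)) : Set (Sym2 W)) := by
      rw [hsup]; exact le_sup_left
    have hle2 : SimpleGraph.fromEdgeSet (A₂ : Set (Sym2 W)) ≤
        SimpleGraph.fromEdgeSet ((A₁ ∪ A₂ : Finset (Sym2 W)) : Set (Sym2 W)) := by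
      rw [hsup]; exact le_sup_right
    have hre : ∀ x ∈ V₁ ∪ V₂,
        (SimpleGraph.fromEdgeSet ((A₁ ∪ A₂ : Finset (Sym2 W)) : Set (Sym2 W))).Reachable x r := by
      intro x hx
      rcases Finset.mem_union.mp hx with h | h
      · exact (h₁.2.2.2 x h r hr1).mono hle1
      · exact (h₂.2.2.2 x h r hr2).mono hle2
    intro x hx y hy
    exact (hre x hx).trans (hre y hy).symm

end Helpers

section Helpers2

lemma part_bound [DecidableEq W] {ι : Type*} (U : Finset W) (E : ι → Finset W) (S : Finset ι)
    (hconn : ∀ x ∈ U, ∀ y ∈ U,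
      Relation.ReflTransGen (fun a b => ∃ i ∈ S, a ∈ E i ∧ b ∈ E i) x y)
    (hEU : ∀ i ∈ S, E i ⊆ U) :
    ∀ n (Q : Finset (Finset W)), Q.card = n →
      (∀ B ∈ Q, B.Nonempty) → (∀ B ∈ Q, B ⊆ U) →
      (↑Q : Set (Finset W)).PairwiseDisjoint id →
      (∀ u ∈ U, ∃ B ∈ Q, u ∈ B) →
      Q.card ≤ 1 + ∑ i ∈ S, ((Q.filter fun B => (B ∩ E i).Nonempty).card - 1) := by
  intro n
  induction n using Nat.strong_induction_on with
  | _ n ih =>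
  intro Q hQn hne hsub hdisj hcov
  by_cases hQ1 : Q.card ≤ 1
  · exact le_trans hQ1 (Nat.le_add_right 1 _)
  push_neg at hQ1
  obtain ⟨B₁, hB₁, B₂, hB₂, h12⟩ := Finset.one_lt_card.mp hQ1
  have hex : ∃ i ∈ S, 2 ≤ (Q.filter fun B => (B ∩ E i).Nonempty).card := by
    by_contra hno
    push_neg at hno
    obtain ⟨x, hx⟩ := hne B₁ hB₁
    obtain ⟨y, hy⟩ := hne B₂ hB₂
    have hchain := hconn x (hsub B₁ hB₁ hx) y (hsub B₂ hB₂ hy)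
    have hstay : ∀ z, Relation.ReflTransGen (fun a b => ∃ i ∈ S, a ∈ E i ∧ b ∈ E i) x z →
        z ∈ B₁ := by
      intro z hz
      induction hz with
      | refl => exact hx
      | tail h₁ hR ih2 =>
        obtain ⟨i, hiS, hbE, hcE⟩ := hR
        obtain ⟨B', hB', hc'⟩ := hcov _ (hEU i hiS hcE)
        have hf1 : B₁ ∈ Q.filter fun B => (B ∩ E i).Nonempty :=
          Finset.mem_filter.mpr ⟨hB₁, ⟨_, Finset.mem_inter.mpr ⟨ih2, hbE⟩⟩⟩
        have hf2 : B' ∈ Q.filter fun B => (B ∩ E i).Nonempty :=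
          Finset.mem_filter.mpr ⟨hB', ⟨_, Finset.mem_inter.mpr ⟨hc', hcE⟩⟩⟩
        have hBB := Finset.card_le_one.mp (by have := hno i hiS; omega) _ hf2 _ hf1
        exact hBB ▸ hc'
    have hy1 := hstay y hchain
    exact (Finset.disjoint_left.mp
      (hdisj (Finset.mem_coe.mpr hB₁) (Finset.mem_coe.mpr hB₂) h12)) hy1 hy
  obtain ⟨i, hiS, hi2⟩ := hex
  set Qi := Q.filter (fun B => (B ∩ E i).Nonempty) with hQi
  set Qm := Q.filter (fun B => ¬ (B ∩ E i).Nonempty) with hQm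
  set M := Qi.sup id with hM
  obtain ⟨B₀, hB₀⟩ : Qi.Nonempty := Finset.card_pos.mp (by omega)
  have hB₀Q : B₀ ∈ Q := (Finset.mem_filter.mp hB₀).1
  have hB₀i : (B₀ ∩ E i).Nonempty := (Finset.mem_filter.mp hB₀).2
  have hMi : (M ∩ E i).Nonempty := by
    obtain ⟨w, hw⟩ := hB₀i
    exact ⟨w, Finset.mem_inter.mpr
      ⟨Finset.mem_sup.mpr ⟨B₀, hB₀, (Finset.mem_inter.mp hw).1⟩, (Finset.mem_inter.mp hw).2⟩⟩
  have hMQm : M ∉ Qm := fun h => (Finset.mem_filter.mp h).2 hMi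
  set Q' := insert M Qm with hQ'
  have hQ'card : Q'.card = Qm.card + 1 := Finset.card_insert_of_notMem hMQm
  have hsplit : Qi.card + Qm.card = Q.card :=
    Finset.card_filter_add_card_filter_not (fun B => (B ∩ E i).Nonempty)
  have hQmQ : Qm ⊆ Q := Finset.filter_subset _ _
  have hne' : ∀ B ∈ Q', B.Nonempty := by
    intro B hB
    rcases Finset.mem_insert.mp hB with rfl | hB'
    · obtain ⟨w, hw⟩ := hMi
      exact ⟨w, (Finset.mem_inter.mp hw).1⟩
    · exact hne B (hQmQ hB')
  have hsub' : ∀ B ∈ Q', B ⊆ U := by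
    intro B hB
    rcases Finset.mem_insert.mp hB with rfl | hB'
    · exact Finset.sup_le fun C hC => hsub C (Finset.mem_filter.mp hC).1
    · exact hsub B (hQmQ hB')
  have hdisj' : (↑Q' : Set (Finset W)).PairwiseDisjoint id := by
    rw [hQ', Finset.coe_insert]
    refine Set.PairwiseDisjoint.insert (hdisj.subset (Finset.coe_subset.mpr hQmQ)) ?_
    intro B hB _
    have hBQm : B ∈ Qm := Finset.mem_coe.mp hB
    refine Finset.disjoint_sup_left.mpr ?_
    intro C hC
    have hCB : C ≠ B := by
      intro hCB'
      exact (Finset.mem_filter.mp hBQm).2 (hCB' ▸ (Finset.mem_filter.mp hC).2)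
    exact hdisj (Finset.mem_coe.mpr (Finset.mem_filter.mp hC).1)
      (Finset.mem_coe.mpr (hQmQ hBQm)) hCB
  have hcov' : ∀ u ∈ U, ∃ B ∈ Q', u ∈ B := by
    intro u hu
    obtain ⟨B, hB, huB⟩ := hcov u hu
    by_cases hBi : (B ∩ E i).Nonempty
    · exact ⟨M, Finset.mem_insert_self _ _,
        Finset.mem_sup.mpr ⟨B, Finset.mem_filter.mpr ⟨hB, hBi⟩, huB⟩⟩
    · exact ⟨B, Finset.mem_insert_of_mem (Finset.mem_filter.mpr ⟨hB, hBi⟩), huB⟩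
  have hlt : Q'.card < n := by omega
  have hIH := ih Q'.card hlt Q' rfl hne' hsub' hdisj' hcov'
  have hle : ∀ i' ∈ S, (Q'.filter fun B => (B ∩ E i').Nonempty).card ≤
      (Q.filter fun B => (B ∩ E i').Nonempty).card := by
    intro i' _
    by_cases hM' : (M ∩ E i').Nonempty
    · obtain ⟨w, hw⟩ := hM'
      obtain ⟨hwM, hwE⟩ := Finset.mem_inter.mp hw
      obtain ⟨C, hCQi, hwC⟩ := Finset.mem_sup.mp hwM
      refine Finset.card_le_card_of_injOn (fun B => if B = M then C else B) ?_ ?_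
      · intro B hB
        obtain ⟨hBQ', hBi'⟩ := Finset.mem_filter.mp hB
        show (if B = M then C else B) ∈ _
        by_cases hBM : B = M
        · rw [if_pos hBM]
          exact Finset.mem_filter.mpr ⟨(Finset.mem_filter.mp hCQi).1,
            ⟨w, Finset.mem_inter.mpr ⟨hwC, hwE⟩⟩⟩
        · rw [if_neg hBM]
          rcases Finset.mem_insert.mp hBQ' with h | h
          · exact absurd h hBM
          · exact Finset.mem_filter.mpr ⟨hQmQ h, hBi'⟩
      · intro B hB B' hB' hBB'
        have hBQ' : B ∈ Q' := (Finset.mem_filter.mp (Finset.mem_coe.mp hB)).1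
        have hB'Q' : B' ∈ Q' := (Finset.mem_filter.mp (Finset.mem_coe.mp hB')).1
        have hBB'' : (if B = M then C else B) = (if B' = M then C else B') := hBB'
        clear hBB'
        rename' hBB'' => hBB'
        by_cases e1 : B = M <;> by_cases e2 : B' = M
        · rw [e1, e2]
        · exfalso
          rw [if_pos e1, if_neg e2] at hBB'
          rcases Finset.mem_insert.mp hB'Q' with h | h
          · exact e2 h
          · exact (Finset.mem_filter.mp h).2 (hBB' ▸ (Finset.mem_filter.mp hCQi).2)
        · exfalso
          rw [if_neg e1, if_pos e2] at hBB'
          rcases Finset.mem_insert.mp hBQ' with h | h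
          · exact e1 h
          · exact (Finset.mem_filter.mp h).2 (hBB' ▸ (Finset.mem_filter.mp hCQi).2)
        · rwa [if_neg e1, if_neg e2] at hBB'
    · have hss : (Q'.filter fun B => (B ∩ E i').Nonempty) ⊆
          (Q.filter fun B => (B ∩ E i').Nonempty) := by
        intro B hB
        obtain ⟨hBQ', hBi'⟩ := Finset.mem_filter.mp hB
        rcases Finset.mem_insert.mp hBQ' with rfl | h
        · exact absurd hBi' hM'
        · exact Finset.mem_filter.mpr ⟨hQmQ h, hBi'⟩
      exact Finset.card_le_card hss
  have hfi : (Q'.filter fun B => (B ∩ E i).Nonempty).card ≤ 1 := by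
    refine le_trans (Finset.card_le_card ?_) (Finset.card_singleton M).le
    intro B hB
    obtain ⟨hBQ', hBi'⟩ := Finset.mem_filter.mp hB
    rcases Finset.mem_insert.mp hBQ' with rfl | h
    · exact Finset.mem_singleton_self _
    · exact absurd hBi' (Finset.mem_filter.mp h).2
  have hsum1 : ∑ i' ∈ S, ((Q'.filter fun B => (B ∩ E i').Nonempty).card - 1)
      ≤ ∑ i' ∈ S.erase i, ((Q.filter fun B => (B ∩ E i').Nonempty).card - 1) := by
    rw [← Finset.sum_erase_add _ _ hiS]
    have h0 : (Q'.filter fun B => (B ∩ E i).Nonempty).card - 1 = 0 := by omega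
    rw [h0, add_zero]
    exact Finset.sum_le_sum fun i' hi' =>
      Nat.sub_le_sub_right (hle i' (Finset.mem_of_mem_erase hi')) 1
  have hsum2 : ∑ i' ∈ S.erase i, ((Q.filter fun B => (B ∩ E i').Nonempty).card - 1) + (Qi.card - 1)
      = ∑ i' ∈ S, ((Q.filter fun B => (B ∩ E i').Nonempty).card - 1) :=
    Finset.sum_erase_add S _ hiS
  calc Q.card = Q'.card + (Qi.card - 1) := by omega
    _ ≤ (1 + ∑ i' ∈ S, ((Q'.filter fun B => (B ∩ E i').Nonempty).card - 1)) + (Qi.card - 1) :=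
        Nat.add_le_add_right hIH _
    _ ≤ (1 + ∑ i' ∈ S.erase i, ((Q.filter fun B => (B ∩ E i').Nonempty).card - 1)) + (Qi.card - 1) :=
        Nat.add_le_add_right (Nat.add_le_add_left hsum1 1) _
    _ = 1 + ∑ i' ∈ S, ((Q.filter fun B => (B ∩ E i').Nonempty).card - 1) := by
        rw [add_assoc, hsum2]

lemma sig_const [DecidableEq W] {ι : Type*} [Fintype ι] [DecidableEq ι] {U : Finset W}
    {F : ι → Finset (Sym2 W)} {k : ℕ} (D : KTreeDecomp U F k) (i : ι) (m : Fin k)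
    (h : ∀ s ∈ F i, D.layer (i, s) = m) : sig D i = m.1 * (F i).card := by
  unfold sig
  refine (Finset.sum_eq_single_of_mem m (Finset.mem_univ _) ?_).trans ?_
  · intro j _ hj
    rw [Finset.filter_false_of_mem, Finset.card_empty, Nat.mul_zero]
    intro s hs hl
    exact hj (((h s hs).symm.trans hl).symm)
  · rw [Finset.filter_true_of_mem h]

lemma cert_wpc [DecidableEq W] {ι : Type*} [Fintype ι] [DecidableEq ι] (U : Finset W)
    (E : ι → Finset W) (k : ℕ) (hE : ∀ i, 2 ≤ (E i).card)
    (C : TwoSidedStarCert U E k) : WeaklyPC U E k := by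
  have hEU : ∀ i, E i ⊆ U := by
    intro i x hx
    obtain ⟨y, hy, hyx⟩ := Finset.exists_mem_ne (hE i) x
    obtain ⟨b, hb⟩ := exists_adj_of_reachable ((C.F_tree i).2.2.2 x hx y hy) hyx.symm
    rw [SimpleGraph.fromEdgeSet_adj] at hb
    have hsF : s(x, b) ∈ C.F i := Finset.mem_coe.mp hb.1
    have hmem : s(x, b) ∈ C.D.tree (C.lmap i) := by
      rw [C.D.tree_eq]
      exact Finset.mem_image.mpr ⟨(i, s(x, b)),
        Finset.mem_filter.mpr ⟨(mem_LEdges _ _).mpr hsF, C.contained i _ hsF⟩, rfl⟩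
    exact (C.D.tree_isTree (C.lmap i)).2.1 _ hmem x (Sym2.mem_mk_left x b)
  intro P
  have hperj : ∀ j : Fin k, P.parts.card ≤
      1 + ∑ i ∈ Finset.univ.filter (fun i => C.lmap i = j), (pblocks P (E i) - 1) := by
    intro j
    have hconn : ∀ x ∈ U, ∀ y ∈ U, Relation.ReflTransGen
        (fun a b => ∃ i ∈ Finset.univ.filter (fun i => C.lmap i = j),
          a ∈ E i ∧ b ∈ E i) x y := by
      intro x hx y hy
      refine reflTransGen_of_reachable ?_ ((C.D.tree_isTree j).2.2.2 x hx y hy)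
      intro a b hab
      rw [SimpleGraph.fromEdgeSet_adj] at hab
      have hmem : s(a, b) ∈ C.D.tree j := Finset.mem_coe.mp hab.1
      rw [C.D.tree_eq] at hmem
      obtain ⟨p, hp, hps⟩ := Finset.mem_image.mp hmem
      obtain ⟨hpL, hpj⟩ := Finset.mem_filter.mp hp
      have hpF : p.2 ∈ C.F p.1 := (mem_LEdges _ _).mp hpL
      have hlm : C.lmap p.1 = j := (C.contained p.1 p.2 hpF).symm.trans hpj
      have ha : a ∈ E p.1 :=
        (C.F_tree p.1).2.1 p.2 hpF a (hps.symm ▸ Sym2.mem_mk_left a b)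
      have hb : b ∈ E p.1 :=
        (C.F_tree p.1).2.1 p.2 hpF b (hps.symm ▸ Sym2.mem_mk_right a b)
      exact ⟨p.1, Finset.mem_filter.mpr ⟨Finset.mem_univ _, hlm⟩, ha, hb⟩
    have hpb := part_bound U E _ hconn (fun i _ => hEU i) P.parts.card P.parts rfl
      (fun B hB => P.nonempty_of_mem_parts hB)
      (fun B hB => Finset.le_iff_subset.mp (P.le hB))
      P.supIndep.pairwiseDisjoint
      (fun u hu => Finset.mem_sup.mp (P.sup_parts.symm ▸ hu))
    simpa [pblocks] using hpb
  calc k * (P.parts.card - 1) = ∑ _j : Fin k, (P.parts.card - 1) := by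
        rw [Finset.sum_const, Finset.card_univ, Fintype.card_fin, smul_eq_mul]
    _ ≤ ∑ j : Fin k, ∑ i ∈ Finset.univ.filter (fun i => C.lmap i = j), (pblocks P (E i) - 1) :=
        Finset.sum_le_sum fun j _ => by have := hperj j; omega
    _ = ∑ i, (pblocks P (E i) - 1) := Finset.sum_fiberwise _ _ _

lemma cert_disting [DecidableEq W] {ι : Type*} [Fintype ι] [DecidableEq ι]
    (U : Finset W) (E : ι → Finset W) (k : ℕ) (C : TwoSidedStarCert U E k) :
    Distinguishable U E k := by
  refine ⟨C.F, C.F_tree, C.D, ?_⟩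
  intro D' hsig p hp
  obtain ⟨i, s⟩ := p
  have hs : s ∈ C.F i := (mem_LEdges _ _).mp hp
  have hD : C.D.layer (i, s) = C.lmap i := C.contained i s hs
  rw [hD]
  have hsig' : sig D' i = (C.lmap i).1 * (C.F i).card := by
    rw [hsig i, sig_const C.D i (C.lmap i) (C.contained i)]
  refine Fin.ext ?_
  by_cases h0 : (C.lmap i).1 = 0
  · have hz : sig D' i = 0 := by rw [hsig', h0, Nat.zero_mul]
    unfold sig at hz
    have hterm := Finset.sum_eq_zero_iff.mp hz (D'.layer (i, s)) (Finset.mem_univ _)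
    have hpos : 0 < ((C.F i).filter fun s' => D'.layer (i, s') = D'.layer (i, s)).card :=
      Finset.card_pos.mpr ⟨s, Finset.mem_filter.mpr ⟨hs, rfl⟩⟩
    rw [h0]
    rcases Nat.mul_eq_zero.mp hterm with h | h
    · exact h
    · omega
  · by_cases hk2 : (C.lmap i).1 ≤ k - 2
    · have hcard := C.interior_rank_two i (by omega) hk2
      have huniq := isTreeOn_pair_unique (C.F_tree i) hcard
      have hFi : C.F i = {s} :=
        Finset.eq_singleton_iff_unique_mem.mpr ⟨hs, fun t ht => huniq t ht s hs⟩
      have hval : sig D' i = (D'.layer (i, s)).1 := by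
        calc sig D' i
            = ∑ j : Fin k, j.1 * (({s} : Finset (Sym2 W)).filter
                fun s' => D'.layer (i, s') = j).card := by
              unfold sig; rw [hFi]
          _ = (D'.layer (i, s)).1 * (({s} : Finset (Sym2 W)).filter
                fun s' => D'.layer (i, s') = D'.layer (i, s)).card :=
              Finset.sum_eq_single_of_mem _ (Finset.mem_univ _) (fun j _ hj => by
                rw [Finset.filter_singleton, if_neg (fun h => hj h.symm),
                  Finset.card_empty, Nat.mul_zero])
          _ = (D'.layer (i, s)).1 := by
              rw [Finset.filter_singleton, if_pos rfl, Finset.card_singleton, Nat.mul_one]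
      rw [hFi, Finset.card_singleton, Nat.mul_one] at hsig'
      rw [← hval, hsig']
    · have hm : (C.lmap i).1 = k - 1 := by have := (C.lmap i).2; omega
      have hfib : (C.F i).card =
          ∑ j : Fin k, ((C.F i).filter fun s' => D'.layer (i, s') = j).card :=
        Finset.card_eq_sum_card_fiberwise (fun s' _ => Finset.mem_univ _)
      have hub : ∀ j ∈ (Finset.univ : Finset (Fin k)),
          j.1 * ((C.F i).filter fun s' => D'.layer (i, s') = j).card
          ≤ (k - 1) * ((C.F i).filter fun s' => D'.layer (i, s') = j).card :=
        fun j _ => mul_le_mul_left (by have := j.2; omega) _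
      have hsum : ∑ j : Fin k, j.1 * ((C.F i).filter fun s' => D'.layer (i, s') = j).card
          = ∑ j : Fin k, (k - 1) * ((C.F i).filter fun s' => D'.layer (i, s') = j).card := by
        rw [← Finset.mul_sum, ← hfib]
        calc (∑ j : Fin k, j.1 * ((C.F i).filter fun s' => D'.layer (i, s') = j).card)
            = sig D' i := rfl
          _ = (k - 1) * (C.F i).card := by rw [hsig', hm]
      have heach := (Finset.sum_eq_sum_iff_of_le hub).mp hsum (D'.layer (i, s)) (Finset.mem_univ _)
      have hpos : 0 < ((C.F i).filter fun s' => D'.layer (i, s') = D'.layer (i, s)).card :=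
        Finset.card_pos.mpr ⟨s, Finset.mem_filter.mpr ⟨hs, rfl⟩⟩
      have hval := Nat.eq_of_mul_eq_mul_right hpos heach
      omega

end Helpers2

section Combine

def combine_cert [DecidableEq W] {ι₁ ι₂ : Type*} [Fintype ι₁] [DecidableEq ι₁]
    [Fintype ι₂] [DecidableEq ι₂]
    (V₁ V₂ : Finset W) (r : W) (hr : V₁ ∩ V₂ = {r})
    (E₁ : ι₁ → Finset W) (E₂ : ι₂ → Finset W)
    (hE₁sub : ∀ i, E₁ i ⊆ V₁) (hE₂sub : ∀ i, E₂ i ⊆ V₂) (k : ℕ)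
    (C₁ : TwoSidedStarCert V₁ E₁ k) (C₂ : TwoSidedStarCert V₂ E₂ k) :
    TwoSidedStarCert (V₁ ∪ V₂) (Sum.elim E₁ E₂) k := by
  have hbothdiag : ∀ {i₁ : ι₁} {i₂ : ι₂} {s : Sym2 W}, s ∈ C₁.F i₁ → s ∈ C₂.F i₂ → False := by
    intro i₁ i₂ s hs1 hs2
    exact (C₁.F_tree i₁).1 s hs1 (sym2_diag_of_both V₁ V₂ r hr s
      (fun v hv => hE₁sub i₁ ((C₁.F_tree i₁).2.1 s hs1 v hv))
      (fun v hv => hE₂sub i₂ ((C₂.F_tree i₂).2.1 s hs2 v hv)))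
  have htree : ∀ j : Fin k,
      ((LEdges (Sum.elim C₁.F C₂.F)).filter fun p =>
        Sum.elim (fun i => C₁.D.layer (i, p.2)) (fun i => C₂.D.layer (i, p.2)) p.1 = j).image
          Prod.snd = C₁.D.tree j ∪ C₂.D.tree j := by
    intro j
    ext s
    constructor
    · intro hs
      obtain ⟨p, hp, hps⟩ := Finset.mem_image.mp hs
      obtain ⟨hpL, hpj⟩ := Finset.mem_filter.mp hp
      obtain ⟨i | i, s'⟩ := p
      · refine Finset.mem_union_left _ ?_
        rw [C₁.D.tree_eq]
        refine Finset.mem_image.mpr ⟨(i, s'), Finset.mem_filter.mpr ⟨?_, ?_⟩, hps⟩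
        · exact (mem_LEdges C₁.F (i, s')).mpr
            ((mem_LEdges (Sum.elim C₁.F C₂.F) (Sum.inl i, s')).mp hpL)
        · exact hpj
      · refine Finset.mem_union_right _ ?_
        rw [C₂.D.tree_eq]
        refine Finset.mem_image.mpr ⟨(i, s'), Finset.mem_filter.mpr ⟨?_, ?_⟩, hps⟩
        · exact (mem_LEdges C₂.F (i, s')).mpr
            ((mem_LEdges (Sum.elim C₁.F C₂.F) (Sum.inr i, s')).mp hpL)
        · exact hpj
    · intro hs
      rcases Finset.mem_union.mp hs with h | h
      · rw [C₁.D.tree_eq] at h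
        obtain ⟨p, hp, hps⟩ := Finset.mem_image.mp h
        obtain ⟨hpL, hpj⟩ := Finset.mem_filter.mp hp
        refine Finset.mem_image.mpr
          ⟨(Sum.inl p.1, p.2), Finset.mem_filter.mpr ⟨?_, ?_⟩, hps⟩
        · exact (mem_LEdges (Sum.elim C₁.F C₂.F) (Sum.inl p.1, p.2)).mpr
            ((mem_LEdges C₁.F p).mp hpL)
        · exact hpj
      · rw [C₂.D.tree_eq] at h
        obtain ⟨p, hp, hps⟩ := Finset.mem_image.mp h
        obtain ⟨hpL, hpj⟩ := Finset.mem_filter.mp hp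
        refine Finset.mem_image.mpr
          ⟨(Sum.inr p.1, p.2), Finset.mem_filter.mpr ⟨?_, ?_⟩, hps⟩
        · exact (mem_LEdges (Sum.elim C₁.F C₂.F) (Sum.inr p.1, p.2)).mpr
            ((mem_LEdges C₂.F p).mp hpL)
        · exact hpj
  refine
    { F := Sum.elim C₁.F C₂.F
      F_tree := ?_
      F_star := ?_
      lmap := Sum.elim C₁.lmap C₂.lmap
      D :=
        { layer := fun p =>
            Sum.elim (fun i => C₁.D.layer (i, p.2)) (fun i => C₂.D.layer (i, p.2)) p.1
          tree := fun j => ((LEdges (Sum.elim C₁.F C₂.F)).filter fun p =>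
              Sum.elim (fun i => C₁.D.layer (i, p.2)) (fun i => C₂.D.layer (i, p.2)) p.1
                = j).image Prod.snd
          tree_eq := fun _ => rfl
          tree_isTree := ?_
          layer_inj := ?_ }
      contained := ?_
      interior_rank_two := ?_ }
  · intro i
    cases i with
    | inl i => exact C₁.F_tree i
    | inr i => exact C₂.F_tree i
  · intro i
    cases i with
    | inl i => exact C₁.F_star i
    | inr i => exact C₂.F_star i
  · intro j
    rw [htree j]
    exact isTreeOn_union hr (C₁.D.tree_isTree j) (C₂.D.tree_isTree j)
  · intro p hp q hq hl he
    obtain ⟨ip, sp⟩ := p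
    obtain ⟨iq, sq⟩ := q
    have he' : sp = sq := he
    subst he'
    have hp' := (mem_LEdges _ _).mp hp
    have hq' := (mem_LEdges _ _).mp hq
    cases ip with
    | inl i₁ =>
      cases iq with
      | inl i₁' =>
        have hinj := C₁.D.layer_inj (i₁, sp) ((mem_LEdges _ _).mpr hp')
          (i₁', sp) ((mem_LEdges _ _).mpr hq') hl rfl
        rw [Prod.mk.injEq] at hinj
        rw [hinj.1]
      | inr i₂ => exact (hbothdiag hp' hq').elim
    | inr i₂ =>
      cases iq with
      | inl i₁ => exact (hbothdiag hq' hp').elim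
      | inr i₂' =>
        have hinj := C₂.D.layer_inj (i₂, sp) ((mem_LEdges _ _).mpr hp')
          (i₂', sp) ((mem_LEdges _ _).mpr hq') hl rfl
        rw [Prod.mk.injEq] at hinj
        rw [hinj.1]
  · intro i
    cases i with
    | inl i => exact C₁.contained i
    | inr i => exact C₂.contained i
  · intro i
    cases i with
    | inl i => exact C₁.interior_rank_two i
    | inr i => exact C₂.interior_rank_two i

end Combine

/-- If `H⁽¹⁾` and `H⁽²⁾` are `k`-critical multihypergraphs on `V₁`,
`V₂` with `V₁ ∩ V₂ = {r}`, each with a two-sided star certificate, then their one-vertex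
sum is `k`-critical and has a two-sided star certificate; in particular it is
`k`-weakly-partition-connected and has a `k`-distinguishable tree assignment. -/
theorem stmt14 {W : Type*} [Fintype W] [DecidableEq W]
    {ι₁ ι₂ : Type*} [Fintype ι₁] [DecidableEq ι₁] [Fintype ι₂] [DecidableEq ι₂]
    (V₁ V₂ : Finset W) (r : W) (hr : V₁ ∩ V₂ = {r})
    (E₁ : ι₁ → Finset W) (E₂ : ι₂ → Finset W)
    (hE₁sub : ∀ i, E₁ i ⊆ V₁) (hE₂sub : ∀ i, E₂ i ⊆ V₂)
    (hE₁ : ∀ i, 2 ≤ (E₁ i).card) (hE₂ : ∀ i, 2 ≤ (E₂ i).card)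
    (k : ℕ)
    (hc₁ : ∑ i, ((E₁ i).card - 1) = k * (V₁.card - 1))
    (hc₂ : ∑ i, ((E₂ i).card - 1) = k * (V₂.card - 1))
    (hcert₁ : Nonempty (TwoSidedStarCert V₁ E₁ k))
    (hcert₂ : Nonempty (TwoSidedStarCert V₂ E₂ k)) :
    (∑ i : ι₁ ⊕ ι₂, ((Sum.elim E₁ E₂ i).card - 1) = k * ((V₁ ∪ V₂).card - 1)) ∧
    Nonempty (TwoSidedStarCert (V₁ ∪ V₂) (Sum.elim E₁ E₂) k) ∧
    WeaklyPC (V₁ ∪ V₂) (Sum.elim E₁ E₂) k ∧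
    Distinguishable (V₁ ∪ V₂) (Sum.elim E₁ E₂) k := by
  obtain ⟨C₁⟩ := hcert₁
  obtain ⟨C₂⟩ := hcert₂
  have C := combine_cert V₁ V₂ r hr E₁ E₂ hE₁sub hE₂sub k C₁ C₂
  have hE : ∀ i : ι₁ ⊕ ι₂, 2 ≤ (Sum.elim E₁ E₂ i).card := by
    intro i
    cases i with
    | inl i => exact hE₁ i
    | inr i => exact hE₂ i
  have hrr : r ∈ V₁ ∩ V₂ := by rw [hr]; exact Finset.mem_singleton_self r
  obtain ⟨hr1, hr2⟩ := Finset.mem_inter.mp hrr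
  refine ⟨?_, ⟨C⟩, cert_wpc _ _ _ hE C, cert_disting _ _ _ C⟩
  have hcap := Finset.card_union_add_card_inter V₁ V₂
  rw [hr, Finset.card_singleton] at hcap
  have h1 : 0 < V₁.card := Finset.card_pos.mpr ⟨r, hr1⟩
  have h2 : 0 < V₂.card := Finset.card_pos.mpr ⟨r, hr2⟩
  rw [Fintype.sum_sum_type]
  simp only [Sum.elim_inl, Sum.elim_inr]
  rw [hc₁, hc₂, ← Nat.mul_add]
  congr 1
  omega

end
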